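/- Let k be a field of characteristic ≠ 2 with u(k) < ∞, and let i, j ≥ 1 be any positive integers. Then max{1, m(k) + 2j − 1 − i} ≤ m_{i,j}(k) ≤ max{1, u(k) + 2j − 1 − i}. Moreover, if either u(k) + 2j − 1 − i ≤ 1 or m(k) = u(k), then both inequalities are equalities. -/

import Mathlib

/-!  Diagonal quadratic forms over a field of characteristic ≠ 2.
In characteristic ≠ 2 every regular quadratic form is isometric to a diagonal form
`⟨d 1, …, d n⟩`, so we model (regular) quadratic forms by their diagonal
coefficient functions. -/

/-- The diagonal quadratic form `⟨d i⟩_{i : ι}` over `k`. -/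
noncomputable def diagQF (k : Type) [Field k] {ι : Type} [Fintype ι] (d : ι → k) :
    QuadraticForm k (ι → k) :=
  QuadraticMap.weightedSumSquares k d

/-- Isometry of (diagonal) quadratic forms. -/
def FormIsom (k : Type) [Field k] {ι κ : Type} [Fintype ι] [Fintype κ]
    (d : ι → k) (e : κ → k) : Prop :=
  QuadraticMap.Equivalent (diagQF k d) (diagQF k e)

/-- The orthogonal sum of `m` copies of the hyperbolic plane `⟨1, -1⟩`. -/
def hypForm (k : Type) [Field k] (m : ℕ) : Fin (2 * m) → k :=
  fun j => if j.val % 2 = 0 then 1 else -1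

/-- The Witt index of a (diagonal) form: the largest `m` such that the form is isometric
to `m·ℍ ⟂ (rest)` for some diagonal form `rest`. -/
noncomputable def wittIndex (k : Type) [Field k] {ι : Type} [Fintype ι] (d : ι → k) : ℕ :=
  sSup {m : ℕ | ∃ (s : ℕ) (e : Fin s → k), FormIsom k d (Sum.elim (hypForm k m) e)}
/-- The u-invariant of a field: the supremum of the dimensions of anisotropic regular
quadratic forms over `k` (`⊤` if unbounded). -/
noncomputable def uInv (k : Type) [Field k] : ℕ∞ :=
  sSup {N : ℕ∞ | ∃ n : ℕ, N = n ∧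
    ∃ d : Fin n → k, (∀ t, d t ≠ 0) ∧ (diagQF k d).Anisotropic}

/-- The refined m-invariant `m_{i,j}(k)`: the least dimension (`⊤` if there is none) of a
regular quadratic form `q` of dimension ≥ 1 over `k` with `i_W(q) < j` such that
`i_W(q ⟂ σ) ≥ j` for every `i`-dimensional regular form `σ` over `k`. -/
noncomputable def mInv (k : Type) [Field k] (i j : ℕ) : ℕ∞ :=
  sInf {N : ℕ∞ | ∃ n : ℕ, N = n ∧ 1 ≤ n ∧
    ∃ d : Fin n → k, (∀ t, d t ≠ 0) ∧ wittIndex k d < j ∧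
      ∀ σ : Fin i → k, (∀ t, σ t ≠ 0) → j ≤ wittIndex k (Sum.elim d σ)}


-- ===================================================================
-- Auxiliary development: Witt theory for diagonal quadratic forms
-- ===================================================================

open QuadraticMap


variable {k : Type} [Field k]


section Abstract
variable {M M₂ M₃ : Type} [AddCommGroup M] [Module k M]
  [AddCommGroup M₂] [Module k M₂] [AddCommGroup M₃] [Module k M₃]

lemma qf_add (Q : QuadraticForm k M) (x y : M) :
    Q (x + y) = Q x + Q y + polar Q x y := by
  simp [polar]

lemma qf_polar_self (Q : QuadraticForm k M) (x : M) : polar Q x x = 2 * Q x := by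
  rw [polar_self, two_smul, two_mul]

lemma qf_iso_polar {Q : QuadraticForm k M} {Q' : QuadraticForm k M₂}
    (g : Q.IsometryEquiv Q') (x y : M) :
    polar Q' (g x) (g y) = polar Q x y := by
  simp only [polar]
  rw [← map_add g, IsometryEquiv.map_app, IsometryEquiv.map_app, IsometryEquiv.map_app]

noncomputable def reflMap (Q : QuadraticForm k M) (v : M) : M →ₗ[k] M :=
  LinearMap.id - LinearMap.smulRight ((Q v)⁻¹ • ((polarBilin Q).flip v)) v

lemma reflMap_apply (Q : QuadraticForm k M) (v x : M) :
    reflMap Q v x = x - ((Q v)⁻¹ * polar Q x v) • v := by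
  simp [reflMap, LinearMap.smulRight_apply, smul_smul]

lemma reflMap_involutive (Q : QuadraticForm k M) (v : M) (hv : Q v ≠ 0) :
    Function.Involutive (reflMap Q v) := by
  intro x
  rw [reflMap_apply, reflMap_apply]
  rw [polar_sub_left, polar_smul_left, qf_polar_self]
  set p := polar Q x v
  rw [smul_eq_mul]
  have : (Q v)⁻¹ * (p - (Q v)⁻¹ * p * (2 * Q v)) = -((Q v)⁻¹ * p) := by
    field_simp; ring
  rw [this, neg_smul, sub_neg_eq_add, sub_add_cancel]

noncomputable def reflIso (Q : QuadraticForm k M) (v : M) (hv : Q v ≠ 0) :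
    Q.IsometryEquiv Q where
  toLinearEquiv :=
    { toLinearMap := reflMap Q v
      invFun := reflMap Q v
      left_inv := reflMap_involutive Q v hv
      right_inv := reflMap_involutive Q v hv }
  map_app' := by
    intro x
    show Q (reflMap Q v x) = Q x
    rw [show (reflMap Q v) x = x + (-((Q v)⁻¹ * polar Q x v)) • v by
      rw [reflMap_apply]; rw [neg_smul, sub_eq_add_neg]]
    rw [qf_add, QuadraticMap.map_smul, polar_smul_right]
    set p := polar Q x v
    rw [smul_eq_mul, smul_eq_mul]
    field_simp
    ring

lemma reflIso_apply (Q : QuadraticForm k M) (v : M) (hv : Q v ≠ 0) (x : M) :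
    reflIso Q v hv x = x - ((Q v)⁻¹ * polar Q x v) • v := reflMap_apply Q v x

def negIso (Q : QuadraticForm k M) : Q.IsometryEquiv Q where
  toLinearEquiv := LinearEquiv.neg k
  map_app' := fun x => QuadraticMap.map_neg Q x

lemma qf_sub (Q : QuadraticForm k M) (x y : M) :
    Q (x - y) = Q x + Q y - polar Q x y := by
  rw [sub_eq_add_neg, qf_add, QuadraticMap.map_neg, polar_neg_right]; ring

lemma exists_iso_map_eq (h2 : (2:k) ≠ 0) (Q : QuadraticForm k M) {u u' : M}
    (hq : Q u = Q u') (hne : Q u ≠ 0) : ∃ g : Q.IsometryEquiv Q, g u = u' := by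
  have key : Q (u - u') + Q (u + u') = 4 * Q u := by
    rw [qf_sub, qf_add, ← hq]; ring
  by_cases h : Q (u - u') ≠ 0
  · refine ⟨reflIso Q (u - u') h, ?_⟩
    rw [reflIso_apply]
    have hp : polar Q u (u - u') = Q (u - u') := by
      rw [polar_sub_right, qf_polar_self, qf_sub, ← hq]
      rw [polar_comm]  -- careful
      ring
    rw [hp, inv_mul_cancel₀ h, one_smul]
    abel
  · push_neg at h
    have h' : Q (u + u') ≠ 0 := by
      intro h''
      rw [h, h''] at key
      have h4Q : (4:k) * Q u = 0 := by simpa using key.symm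
      have h4 : (4:k) ≠ 0 := by
        have : (4:k) = 2 * 2 := by norm_num
        rw [this]; exact mul_ne_zero h2 h2
      exact hne ((mul_eq_zero.mp h4Q).resolve_left h4)
    refine ⟨(reflIso Q (u + u') h').trans (negIso Q), ?_⟩
    have hp : polar Q u (u + u') = Q (u + u') := by
      rw [polar_add_right, qf_polar_self, qf_add, ← hq]
      rw [polar_comm]
      ring
    show (negIso Q) ((reflIso Q (u+u') h') u) = u'
    rw [reflIso_apply, hp, inv_mul_cancel₀ h', one_smul]
    show -(u - (u + u')) = u'
    abel

end Abstract

section AbstractBC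
variable {M M₂ M₃ : Type} [AddCommGroup M] [Module k M]
  [AddCommGroup M₂] [Module k M₂] [AddCommGroup M₃] [Module k M₃]
lemma polar_prod' (Q₂ : QuadraticForm k M₂) (Q₃ : QuadraticForm k M₃) (x y : M₂ × M₃) :
    polar (Q₂.prod Q₃) x y = polar Q₂ x.1 y.1 + polar Q₃ x.2 y.2 := by
  simp [polar, QuadraticMap.prod_apply]; ring

lemma polar_one_dim (Q₁ : QuadraticForm k k) (t : k) :
    polar Q₁ 1 t = 2 * t * Q₁ 1 := by
  have h1 : ∀ x : k, Q₁ x = (x * x) * Q₁ 1 := fun x => by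
    simpa [smul_eq_mul] using Q₁.map_smul x 1
  simp only [polar]
  rw [h1 (1+t), h1 t]
  ring

lemma iso_symm_apply_apply {Q : QuadraticForm k M} {Q' : QuadraticForm k M₂}
    (f : Q.IsometryEquiv Q') (z : M) : f.symm (f z) = z :=
  f.toLinearEquiv.symm_apply_apply z

lemma iso_apply_symm_apply {Q : QuadraticForm k M} {Q' : QuadraticForm k M₂}
    (f : Q.IsometryEquiv Q') (z : M₂) : f (f.symm z) = z :=
  f.toLinearEquiv.apply_symm_apply z

lemma fst_eq_zero_of_fix (h2 : (2:k) ≠ 0) (Q₁ : QuadraticForm k k) (h1 : Q₁ 1 ≠ 0)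
    {Ma Mb : Type} [AddCommGroup Ma] [Module k Ma] [AddCommGroup Mb] [Module k Mb]
    (Qa : QuadraticForm k Ma) (Qb : QuadraticForm k Mb)
    (ψ : (Q₁.prod Qa).IsometryEquiv (Q₁.prod Qb))
    (hψ : ψ ((1:k),(0:Ma)) = ((1:k),(0:Mb))) (x : Ma) : (ψ (0, x)).1 = 0 := by
  have hpol := qf_iso_polar ψ ((1:k),(0:Ma)) ((0:k), x)
  rw [hψ, polar_prod', polar_prod'] at hpol
  simp only [polar_zero_left, polar_zero_right, add_zero, zero_add] at hpol
  rw [polar_one_dim] at hpol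
  rcases mul_eq_zero.mp hpol with h | h
  · rcases mul_eq_zero.mp h with h' | h'
    · exact absurd h' h2
    · exact h'
  · exact absurd h h1

theorem cancel_one (h2 : (2:k) ≠ 0) (Q₁ : QuadraticForm k k) (h1 : Q₁ 1 ≠ 0)
    (Q₂ : QuadraticForm k M₂) (Q₃ : QuadraticForm k M₃)
    (h : (Q₁.prod Q₂).Equivalent (Q₁.prod Q₃)) : Q₂.Equivalent Q₃ := by
  obtain ⟨f⟩ := h
  have hqu : (Q₁.prod Q₃) (f (1,0)) = Q₁ 1 := by
    rw [IsometryEquiv.map_app]; simp [QuadraticMap.prod_apply]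
  have hqu' : (Q₁.prod Q₃) ((1,0) : k × M₃) = Q₁ 1 := by simp [QuadraticMap.prod_apply]
  obtain ⟨g, hg⟩ := exists_iso_map_eq h2 (Q₁.prod Q₃) (hqu.trans hqu'.symm)
    (by rw [hqu]; exact h1)
  set φ := f.trans g with hφdef
  have hφ1 : φ ((1:k), (0:M₂)) = ((1:k), (0:M₃)) := hg
  have hφ1' : φ.symm ((1:k), (0:M₃)) = ((1:k), (0:M₂)) := by
    rw [← hφ1, iso_symm_apply_apply]
  have key : ∀ x : M₂, φ (0, x) = (0, (φ (0, x)).2) := fun x =>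
    Prod.ext (fst_eq_zero_of_fix h2 Q₁ h1 Q₂ Q₃ φ hφ1 x) rfl
  have key' : ∀ y : M₃, φ.symm (0, y) = (0, (φ.symm (0, y)).2) := fun y =>
    Prod.ext (fst_eq_zero_of_fix h2 Q₁ h1 Q₃ Q₂ φ.symm hφ1' y) rfl
  have hadd : ∀ x y : M₂, φ (0, x + y) = φ (0, x) + φ (0, y) := by
    intro x y
    rw [← map_add φ]
    norm_num
  have hsmul : ∀ (c : k) (x : M₂), φ (0, c • x) = c • φ (0, x) := by
    intro c x
    rw [← map_smul φ]
    norm_num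
  refine ⟨⟨⟨⟨⟨fun x => (φ (0, x)).2, ?_⟩, ?_⟩, fun y => (φ.symm (0, y)).2, ?_, ?_⟩, ?_⟩⟩
  · intro x y
    show (φ (0, x + y)).2 = (φ (0, x)).2 + (φ (0, y)).2
    rw [hadd]; rfl
  · intro c x
    show (φ (0, c • x)).2 = c • (φ (0, x)).2
    rw [hsmul]; rfl
  · intro x
    show (φ.symm (0, (φ (0,x)).2)).2 = x
    rw [← key, iso_symm_apply_apply]
  · intro y
    show (φ ((0:k), (φ.symm (0,y)).2)).2 = y
    have : ((0:k), (φ.symm (0,y)).2) = φ.symm (0, y) := (key' y).symm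
    rw [this]
    rw [iso_apply_symm_apply]
  · intro x
    show Q₃ ((φ (0,x)).2) = Q₂ x
    have h0 : (Q₁.prod Q₃) (φ (0, x)) = Q₂ x := by
      rw [IsometryEquiv.map_app]; simp [QuadraticMap.prod_apply]
    rw [key x, QuadraticMap.prod_apply, map_zero, zero_add] at h0
    exact h0



end AbstractBC
section AbstractC2
variable {M : Type} [AddCommGroup M] [Module k M]
/-- The orthogonal complement of a vector. -/
noncomputable def orthC (Q : QuadraticForm k M) (w : M) : Submodule k M :=
  LinearMap.ker ((polarBilin Q).flip w)

lemma mem_orthC {Q : QuadraticForm k M} {w x : M} :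
    x ∈ orthC Q w ↔ polar Q x w = 0 := by
  simp [orthC, LinearMap.mem_ker]

/-- Restriction of a quadratic form to a submodule. -/
noncomputable def qOn (Q : QuadraticForm k M) (W : Submodule k M) : QuadraticForm k W :=
  Q.comp W.subtype

lemma qOn_apply {Q : QuadraticForm k M} {W : Submodule k M} (x : W) :
    qOn Q W x = Q (x : M) := rfl

theorem split_off (h2 : (2:k) ≠ 0) (Q : QuadraticForm k M) (w : M) (hw : Q w ≠ 0) :
    ∃ Q₁ : QuadraticForm k k, Q₁ 1 = Q w ∧
      Q.Equivalent (Q₁.prod (qOn Q (orthC Q w))) := by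
  set W := orthC Q w with hW
  have h2Q : (2 : k) * Q w ≠ 0 := mul_ne_zero h2 hw
  -- the function-level equivalence
  refine ⟨Q w • QuadraticMap.sq, by simp [QuadraticMap.sq], ?_⟩
  -- build the isometry from k × W to M
  have hQval : ∀ (t : k) (y : W), Q (t • w + (y:M)) =
      ((Q w • QuadraticMap.sq).prod (qOn Q W)) (t, y) := by
    intro t y
    rw [qf_add, QuadraticMap.map_smul]
    have hy : polar Q (t • w) (y:M) = 0 := by
      rw [polar_smul_left, polar_comm]
      rw [smul_eq_mul, (mem_orthC.mp y.2 : polar Q (y:M) w = 0), mul_zero]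
    rw [hy, add_zero, QuadraticMap.prod_apply, qOn_apply]
    simp [QuadraticMap.sq, smul_eq_mul]
    ring
  -- linear equiv
  let E : (k × W) ≃ₗ[k] M := by
    refine LinearEquiv.ofLinear
      ((LinearMap.fst k k W).smulRight w + W.subtype ∘ₗ (LinearMap.snd k k W))
      (LinearMap.prod (((2 * Q w)⁻¹) • ((polarBilin Q).flip w))
        (LinearMap.codRestrict W
          (LinearMap.id - LinearMap.smulRight (((2 * Q w)⁻¹) • ((polarBilin Q).flip w)) w)
          (fun x => by
            rw [mem_orthC]
            simp only [LinearMap.sub_apply, LinearMap.id_apply, LinearMap.smulRight_apply,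
              LinearMap.smul_apply, LinearMap.flip_apply, polarBilin_apply_apply]
            rw [polar_sub_left, polar_smul_left, qf_polar_self]
            rw [smul_eq_mul, smul_eq_mul]
            field_simp; ring)))
      ?_ ?_
    · apply LinearMap.ext
      intro x
      simp only [LinearMap.coe_comp, Function.comp_apply, LinearMap.prod_apply,
        LinearMap.add_apply, LinearMap.fst_apply, LinearMap.snd_apply,
        LinearMap.smulRight_apply, LinearMap.smul_apply, LinearMap.flip_apply,
        polarBilin_apply_apply, LinearMap.codRestrict_apply, LinearMap.id_apply,
        LinearMap.sub_apply, Submodule.coe_subtype, LinearMap.id_coe, id_eq, Pi.prod, Function.prod_apply]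
      rw [smul_eq_mul]
      abel
    · apply LinearMap.ext
      intro z
      obtain ⟨t, y⟩ := z
      apply Prod.ext
      · simp only [LinearMap.coe_comp, Function.comp_apply, LinearMap.prod_apply,
          LinearMap.add_apply, LinearMap.fst_apply, LinearMap.snd_apply,
          LinearMap.smulRight_apply, LinearMap.smul_apply, LinearMap.flip_apply,
          polarBilin_apply_apply, Submodule.coe_subtype, LinearMap.id_apply, Pi.prod, Function.prod_apply]
        rw [polar_add_left, polar_smul_left, qf_polar_self,
          (mem_orthC.mp y.2 : polar Q (y:M) w = 0)]
        rw [smul_eq_mul, smul_eq_mul]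
        field_simp; ring
      · apply Subtype.ext
        simp only [LinearMap.coe_comp, Function.comp_apply, LinearMap.prod_apply,
          LinearMap.add_apply, LinearMap.fst_apply, LinearMap.snd_apply,
          LinearMap.smulRight_apply, LinearMap.smul_apply, LinearMap.flip_apply,
          polarBilin_apply_apply, LinearMap.codRestrict_apply, LinearMap.id_apply,
          LinearMap.sub_apply, Submodule.coe_subtype, Pi.prod, Function.prod_apply]
        rw [polar_add_left, polar_smul_left, qf_polar_self,
          (mem_orthC.mp y.2 : polar Q (y:M) w = 0)]
        rw [smul_eq_mul, smul_eq_mul]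
        have : (2 * Q w)⁻¹ * (t * (2 * Q w) + 0) = t := by field_simp; ring
        rw [this]
        abel
  -- assemble
  have hE : ∀ (t : k) (y : W), E (t, y) = t • w + (y : M) := by
    intro t y
    simp [E, LinearEquiv.ofLinear_apply]
  have iso : ((Q w • QuadraticMap.sq).prod (qOn Q W)).IsometryEquiv Q := by
    refine ⟨E, ?_⟩
    intro z
    obtain ⟨t, y⟩ := z
    show Q (E (t, y)) = _
    rw [hE, hQval]
  exact ⟨iso.symm⟩



end AbstractC2


variable {ι κ μ : Type} [Fintype ι] [Fintype κ] [Fintype μ]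

lemma diag_apply (d : ι → k) (x : ι → k) :
    diagQF k d x = ∑ i, d i * (x i * x i) := by
  simp [diagQF, QuadraticMap.weightedSumSquares_apply, smul_eq_mul]

lemma FormIsom.refl (d : ι → k) : FormIsom k d d := Equivalent.refl _

lemma FormIsom.symm {d : ι → k} {e : κ → k} (h : FormIsom k d e) : FormIsom k e d :=
  Equivalent.symm h

lemma FormIsom.trans {d : ι → k} {e : κ → k} {f : μ → k}
    (h : FormIsom k d e) (h' : FormIsom k e f) : FormIsom k d f :=
  Equivalent.trans h h'

lemma isom_reindex (d : ι → k) (σ : κ ≃ ι) : FormIsom k (d ∘ σ) d := by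
  refine ⟨⟨(LinearEquiv.funCongrLeft k k σ).symm, ?_⟩⟩
  intro x
  show diagQF k d (x ∘ σ.symm) = diagQF k (d ∘ σ) x
  rw [diag_apply, diag_apply]
  apply Fintype.sum_equiv σ.symm
  intro i
  simp

lemma isom_of_comp_eq {d : ι → k} {e : κ → k} (σ : ι ≃ κ) (h : d = e ∘ σ) :
    FormIsom k d e := h ▸ isom_reindex e σ

lemma isom_sum_prod (c : ι → k) (d : κ → k) :
    (diagQF k (Sum.elim c d)).Equivalent ((diagQF k c).prod (diagQF k d)) := by
  refine ⟨⟨LinearEquiv.sumArrowLequivProdArrow ι κ k k, ?_⟩⟩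
  intro x
  show ((diagQF k c).prod (diagQF k d)) (x ∘ Sum.inl, x ∘ Sum.inr) = _
  rw [QuadraticMap.prod_apply, diag_apply, diag_apply, diag_apply]
  rw [Fintype.sum_sum_type]
  simp

lemma isom_sum_congr {ν : Type} [Fintype ν] {d : ι → k} {e : κ → k} {d' : μ → k} {e' : ν → k}
    (h₁ : FormIsom k d d') (h₂ : FormIsom k e e') :
    FormIsom k (Sum.elim d e) (Sum.elim d' e') :=
  ((isom_sum_prod d e).trans (Equivalent.prod h₁ h₂)).trans (isom_sum_prod d' e').symm

lemma isom_sum_comm (d : ι → k) (e : κ → k) :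
    FormIsom k (Sum.elim d e) (Sum.elim e d) := by
  apply isom_of_comp_eq (Equiv.sumComm ι κ)
  funext x
  cases x <;> rfl

lemma isom_sum_assoc (c : ι → k) (d : κ → k) (e : μ → k) :
    FormIsom k (Sum.elim (Sum.elim c d) e) (Sum.elim c (Sum.elim d e)) := by
  apply isom_of_comp_eq (Equiv.sumAssoc ι κ μ)
  funext x
  rcases x with (x | x) | x <;> rfl

lemma isom_single (c : k) :
    (diagQF k (fun _ : Fin 1 => c)).Equivalent (c • QuadraticMap.sq (R := k)) := by
  refine ⟨⟨LinearEquiv.funUnique (Fin 1) k k, ?_⟩⟩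
  intro x
  show (c • QuadraticMap.sq (R := k)) (x 0) = _
  rw [diag_apply]
  simp [QuadraticMap.sq, Fin.sum_univ_one]

lemma isom_card {d : ι → k} {e : κ → k} (h : FormIsom k d e) :
    Fintype.card ι = Fintype.card κ := by
  obtain ⟨f⟩ := h
  have := f.toLinearEquiv.finrank_eq
  rwa [Module.finrank_pi, Module.finrank_pi] at this

lemma diag_polar (d : ι → k) (x y : ι → k) :
    polar (diagQF k d) x y = ∑ i, 2 * d i * x i * y i := by
  simp only [polar, diag_apply, Pi.add_apply]
  rw [← Finset.sum_sub_distrib, ← Finset.sum_sub_distrib]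
  apply Finset.sum_congr rfl
  intro i _
  ring

lemma iso_aniso {M M' : Type} [AddCommGroup M] [Module k M] [AddCommGroup M'] [Module k M']
    {Q : QuadraticForm k M} {Q' : QuadraticForm k M'}
    (h : Q.Equivalent Q') (ha : Q'.Anisotropic) : Q.Anisotropic := by
  obtain ⟨f⟩ := h
  intro x hx
  have : Q' (f x) = 0 := by rw [IsometryEquiv.map_app]; exact hx
  have := ha _ this
  have := congrArg f.toLinearEquiv.symm this
  simpa using this

lemma aniso_entries_ne_zero {d : ι → k} (h : (diagQF k d).Anisotropic) (t : ι) : d t ≠ 0 := by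
  classical
  intro h0
  have hx : diagQF k d (Pi.single t 1) = 0 := by
    rw [diag_apply]
    rw [Finset.sum_eq_single t]
    · simp [h0]
    · intro i _ hi; simp [Pi.single_eq_of_ne hi]
    · simp
  have := h _ hx
  have := congrFun this t
  simp at this

lemma entries_ne_zero_of_isom (h2 : (2:k) ≠ 0) {d : ι → k} {e : κ → k}
    (h : FormIsom k d e) (hd : ∀ t, d t ≠ 0) (t : κ) : e t ≠ 0 := by
  classical
  intro h0
  obtain ⟨f⟩ := h
  set z := f.toLinearEquiv.symm (Pi.single t 1) with hz
  have hz0 : z ≠ 0 := by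
    intro hz0
    have : (Pi.single t 1 : κ → k) = 0 := by
      have := congrArg f.toLinearEquiv hz0
      simpa [hz] using this
    have := congrFun this t
    simp at this
  apply hz0
  funext s
  have hfz : f z = Pi.single t 1 := by
    show f.toLinearEquiv _ = _
    rw [hz, f.toLinearEquiv.apply_symm_apply]
  have hpol : ∀ y : ι → k, polar (diagQF k d) z y = 0 := by
    intro y
    have h1 := qf_iso_polar f z y
    rw [hfz] at h1
    rw [← h1, diag_polar]
    apply Finset.sum_eq_zero
    intro i _
    by_cases hi : i = t
    · subst hi; simp [h0]
    · simp [Pi.single_eq_of_ne hi]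
  have hs := hpol (Pi.single s 1)
  rw [diag_polar, Finset.sum_eq_single s] at hs
  · simp only [Pi.single_eq_same, mul_one] at hs
    simp only [Pi.zero_apply]
    rcases mul_eq_zero.mp hs with h' | h'
    · rcases mul_eq_zero.mp h' with h'' | h''
      · exact absurd h'' h2
      · exact absurd h'' (hd s)
    · exact h'
  · intro i _ hi; simp [Pi.single_eq_of_ne hi]
  · simp

section EE
variable {ι κ μ ν : Type} [Fintype ι] [Fintype κ] [Fintype μ] [Fintype ν]

variable {ι κ μ ν : Type} [Fintype ι] [Fintype κ] [Fintype μ] [Fintype ν]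

lemma one_dim_eq (Q₁ : QuadraticForm k k) : Q₁ = Q₁ 1 • QuadraticMap.sq := by
  ext x
  have := Q₁.map_smul x 1
  simp only [smul_eq_mul, mul_one] at this
  simp [QuadraticMap.sq, this, smul_eq_mul]
  ring

lemma hyp_ne_zero (m : ℕ) (j : Fin (2*m)) : hypForm k m j ≠ 0 := by
  unfold hypForm
  split
  · exact one_ne_zero
  · exact neg_ne_zero.mpr one_ne_zero

lemma isom_empty_left [IsEmpty μ] (c : μ → k) (d : ι → k) :
    FormIsom k (Sum.elim c d) d := by
  apply isom_of_comp_eq (Equiv.emptySum μ ι)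
  funext x
  rcases x with x | x
  · exact isEmptyElim x
  · rfl

lemma isom_toFin (g : κ → k) : FormIsom k g (g ∘ (Fintype.equivFin κ).symm) := by
  apply isom_of_comp_eq (Fintype.equivFin κ)
  funext x
  simp

lemma hyp_add (a b : ℕ) :
    FormIsom k (hypForm k (a+b)) (Sum.elim (hypForm k a) (hypForm k b)) := by
  apply FormIsom.symm
  apply isom_of_comp_eq ((finSumFinEquiv).trans (finCongr (by ring : 2*a+2*b = 2*(a+b))))
  funext x
  rcases x with j | j
  · simp [hypForm, finSumFinEquiv]
  · simp only [Function.comp_apply, Equiv.trans_apply, finSumFinEquiv_apply_right,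
      finCongr_apply, Sum.elim_inr]
    show hypForm k b j = hypForm k (a+b) _
    unfold hypForm
    have : ((Fin.cast (by ring : 2*a+2*b = 2*(a+b)) (Fin.natAdd (2*a) j)) : Fin (2*(a+b))).val
        = 2*a + j.val := rfl
    rw [this, Nat.mul_add_mod]

lemma isom_pair_hyp : FormIsom k (Sum.elim (fun _ : Fin 1 => (1:k)) (fun _ : Fin 1 => (-1:k)))
    (hypForm k 1) := by
  apply isom_of_comp_eq (finSumFinEquiv : Fin 1 ⊕ Fin 1 ≃ Fin 2)
  funext x
  rcases x with j | j
  · have : j = 0 := Subsingleton.elim _ _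
    subst this
    rfl
  · have : j = 0 := Subsingleton.elim _ _
    subst this
    rfl

-- membership facts for wittIndex
lemma witt_mem_zero (d : ι → k) :
    0 ∈ {m : ℕ | ∃ (s : ℕ) (e : Fin s → k), FormIsom k d (Sum.elim (hypForm k m) e)} := by
  haveI : IsEmpty (Fin (2*0)) := ⟨fun x => absurd x.isLt (by omega)⟩
  refine ⟨Fintype.card ι, d ∘ (Fintype.equivFin ι).symm, ?_⟩
  exact (isom_toFin d).trans (isom_empty_left _ _).symm

lemma witt_bddAbove (d : ι → k) :
    BddAbove {m : ℕ | ∃ (s : ℕ) (e : Fin s → k), FormIsom k d (Sum.elim (hypForm k m) e)} := by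
  refine ⟨Fintype.card ι, ?_⟩
  rintro m ⟨s, e, h⟩
  have := isom_card h
  simp only [Fintype.card_sum, Fintype.card_fin] at this
  omega

lemma witt_ge_of_isom {d : ι → k} {m : ℕ} {g : κ → k}
    (h : FormIsom k d (Sum.elim (hypForm k m) g)) : m ≤ wittIndex k d := by
  apply le_csSup (witt_bddAbove d)
  exact ⟨Fintype.card κ, g ∘ (Fintype.equivFin κ).symm,
    h.trans (isom_sum_congr (FormIsom.refl _) (isom_toFin g))⟩

lemma witt_isom {d : ι → k} {e : κ → k} (h : FormIsom k d e) :
    wittIndex k d = wittIndex k e := by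
  unfold wittIndex
  congr 1
  ext m
  exact ⟨fun ⟨s, f, hf⟩ => ⟨s, f, h.symm.trans hf⟩, fun ⟨s, f, hf⟩ => ⟨s, f, h.trans hf⟩⟩

lemma hyp_isotropic {f : κ → k} {r : ℕ} (hr : 1 ≤ r) :
    ¬ (diagQF k (Sum.elim (hypForm k r) f)).Anisotropic := by
  classical
  intro h
  set x : (Fin (2*r) ⊕ κ) → k :=
    Sum.elim (fun j => if j.val < 2 then 1 else 0) 0 with hx
  have h0lt : (0:ℕ) < 2*r := by omega
  have h1lt : (1:ℕ) < 2*r := by omega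
  have hQx : diagQF k (Sum.elim (hypForm k r) f) x = 0 := by
    rw [diag_apply]
    have hvanish : ∀ i ∈ (Finset.univ : Finset (Fin (2*r) ⊕ κ)),
        i ∉ ({Sum.inl ⟨0, h0lt⟩, Sum.inl ⟨1, h1lt⟩} : Finset (Fin (2*r) ⊕ κ)) →
        Sum.elim (hypForm k r) f i * (x i * x i) = 0 := by
      rintro (j | j) _ hi
      · have : ¬ (j.val < 2) := by
          intro hj
          apply hi
          simp only [Finset.mem_insert, Finset.mem_singleton]
          interval_cases h : j.val
          · left; congr 1; exact Fin.ext (by simp [h])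
          · right; congr 1; exact Fin.ext (by simp [h])
        simp [hx, this]; exact fun h => absurd (by omega : (j:ℕ) < 2) this
      · simp [hx]
    rw [← Finset.sum_subset (Finset.subset_univ _) hvanish]
    rw [Finset.sum_pair (by simp [Fin.ext_iff] : (Sum.inl ⟨0, h0lt⟩ : Fin (2*r) ⊕ κ) ≠ Sum.inl ⟨1, h1lt⟩)]
    simp [hx, hypForm]
  have hx0 := h x hQx
  have := congrFun hx0 (Sum.inl ⟨0, h0lt⟩)
  simp [hx] at this

theorem cancel_single (h2 : (2:k) ≠ 0) {a : k} (ha : a ≠ 0) {d : ι → k} {e : κ → k}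
    (h : FormIsom k (Sum.elim (fun _ : Fin 1 => a) d) (Sum.elim (fun _ : Fin 1 => a) e)) :
    FormIsom k d e := by
  have ha1 : (a • (QuadraticMap.sq : QuadraticForm k k)) 1 ≠ 0 := by
    simpa [QuadraticMap.smul_apply, QuadraticMap.sq_apply, smul_eq_mul] using ha
  apply cancel_one h2 (a • (QuadraticMap.sq : QuadraticForm k k)) ha1
  have e1 : (diagQF k (Sum.elim (fun _ : Fin 1 => a) d)).Equivalent
      ((a • (QuadraticMap.sq : QuadraticForm k k)).prod (diagQF k d)) :=
    (isom_sum_prod _ _).trans (Equivalent.prod (isom_single a) (Equivalent.refl _))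
  have e2 : (diagQF k (Sum.elim (fun _ : Fin 1 => a) e)).Equivalent
      ((a • (QuadraticMap.sq : QuadraticForm k k)).prod (diagQF k e)) :=
    (isom_sum_prod _ _).trans (Equivalent.prod (isom_single a) (Equivalent.refl _))
  have hh : (diagQF k (Sum.elim (fun _ : Fin 1 => a) d)).Equivalent
      (diagQF k (Sum.elim (fun _ : Fin 1 => a) e)) := h
  exact e1.symm.trans (hh.trans e2)

theorem cancel_left_fin (h2 : (2:k) ≠ 0) :
    ∀ (m : ℕ) (c : Fin m → k), (∀ t, c t ≠ 0) → ∀ {ι κ : Type} [Fintype ι] [Fintype κ],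
    ∀ {d : ι → k} {e : κ → k},
    FormIsom k (Sum.elim c d) (Sum.elim c e) → FormIsom k d e := by
  intro m
  induction m with
  | zero =>
    intro c hc ι κ _ _ d e h
    exact ((isom_empty_left c d).symm.trans h).trans (isom_empty_left c e)
  | succ m IH =>
    intro c hc ι κ _ _ d e h
    set c' : Fin m → k := c ∘ Fin.succ with hc'
    have hsplit : FormIsom k (Sum.elim (fun _ : Fin 1 => c 0) c') c := by
      apply isom_of_comp_eq ((finSumFinEquiv : Fin 1 ⊕ Fin m ≃ Fin (1+m)).trans
        (finCongr (by omega : 1+m = m+1)))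
      funext x
      rcases x with j | j
      · have : j = 0 := Subsingleton.elim _ _
        subst this
        show c 0 = c _
        exact congrArg c (Fin.ext rfl)
      · show c' j = c _
        rw [hc']
        show c j.succ = c _
        exact congrArg c (Fin.ext (by
          show (j : ℕ) + 1 = 1 + (j : ℕ)
          omega))
    have key : ∀ {τ : Type} [Fintype τ] (f : τ → k),
        FormIsom k (Sum.elim c f) (Sum.elim (fun _ : Fin 1 => c 0) (Sum.elim c' f)) := by
      intro τ _ f
      exact ((isom_sum_congr hsplit.symm (FormIsom.refl f)).trans (isom_sum_assoc _ _ _))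
    have h' := ((key d).symm.trans h).trans (key e)
    have := cancel_single h2 (hc 0) h'
    exact IH c' (fun t => hc t.succ) this

theorem cancel_left (h2 : (2:k) ≠ 0) {c : μ → k} (hc : ∀ t, c t ≠ 0) {d : ι → k} {e : κ → k}
    (h : FormIsom k (Sum.elim c d) (Sum.elim c e)) : FormIsom k d e := by
  set c'' := c ∘ (Fintype.equivFin μ).symm with hc''
  have hiso : FormIsom k c c'' := isom_toFin c
  have h' : FormIsom k (Sum.elim c'' d) (Sum.elim c'' e) :=
    ((isom_sum_congr hiso (FormIsom.refl d)).symm.trans h).trans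
      (isom_sum_congr hiso (FormIsom.refl e))
  exact cancel_left_fin h2 (Fintype.card μ) c'' (fun t => hc _) h'

set_option maxHeartbeats 1000000 in
set_option synthInstance.maxHeartbeats 400000 in
theorem exists_decomp_aux (h2 : (2:k) ≠ 0) :
    ∀ (n : ℕ) (ι : Type) (instι : Fintype ι) (d : ι → k),
    Fintype.card ι = n → (∀ t, d t ≠ 0) →
    ∃ (w s : ℕ) (e : Fin s → k), (diagQF k e).Anisotropic ∧
      FormIsom k d (Sum.elim (hypForm k w) e) := by
  intro n
  induction n using Nat.strong_induction_on with
  | _ n IH =>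
    intro ι instι d hcard hd
    classical
    by_cases han : (diagQF k d).Anisotropic
    · haveI : IsEmpty (Fin (2*0)) := ⟨fun x => absurd x.isLt (by omega)⟩
      refine ⟨0, Fintype.card ι, d ∘ (Fintype.equivFin ι).symm, ?_, ?_⟩
      · exact iso_aniso (isom_reindex d _) han
      · exact (isom_toFin d).trans (isom_empty_left _ _).symm
    · rw [QuadraticMap.not_anisotropic_iff_exists] at han
      obtain ⟨x, hx0, hQx⟩ := han
      obtain ⟨t₀, hxt₀⟩ := Function.ne_iff.mp hx0
      have hxt₀' : x t₀ ≠ 0 := by simpa using hxt₀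
      set Q := diagQF k d with hQdef
      set u : ι → k := Pi.single t₀ 1 with hu
      have hb : polar Q x u = 2 * d t₀ * x t₀ := by
        rw [hQdef, diag_polar, Finset.sum_eq_single t₀]
        · simp [hu]
        · intro i _ hi; simp [hu, Pi.single_eq_of_ne hi]
        · simp
      set b := 2 * d t₀ * x t₀ with hbdef
      have hbne : b ≠ 0 := mul_ne_zero (mul_ne_zero h2 (hd t₀)) hxt₀'
      set c := Q u * b⁻¹ with hc
      set u' := u - c • x with hu'
      have hpxx : polar Q x x = 0 := by
        have : polar Q x x = 2 * Q x := by rw [polar_self, two_smul, two_mul]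
        rw [this, hQx, mul_zero]
      have hpux : polar Q u x = b := by rw [polar_comm]; exact hb
      have hQu' : Q u' = 0 := by
        rw [hu', qf_sub, QuadraticMap.map_smul, polar_smul_right, hQx, hpux]
        rw [smul_eq_mul, smul_eq_mul, hc]
        field_simp; ring
      have hpxu' : polar Q x u' = b := by
        rw [hu', polar_sub_right, polar_smul_right, hpxx, hb]
        rw [smul_eq_mul]
        ring
      have hpu'x : polar Q u' x = b := by rw [polar_comm]; exact hpxu'
      have hpu'u' : polar Q u' u' = 0 := by
        have : polar Q u' u' = 2 * Q u' := by rw [polar_self, two_smul, two_mul]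
        rw [this, hQu', mul_zero]
      set w₁ := b⁻¹ • x + u' with hw₁
      set w₂ := b⁻¹ • x - u' with hw₂
      have hQbx : Q (b⁻¹ • x) = 0 := by
        rw [QuadraticMap.map_smul, hQx, smul_zero]
      have hpbxu' : polar Q (b⁻¹ • x) u' = 1 := by
        rw [polar_smul_left, hpxu', smul_eq_mul, inv_mul_cancel₀ hbne]
      have hQw₁ : Q w₁ = 1 := by
        rw [hw₁, qf_add, hQbx, hQu', hpbxu']; ring
      have hQw₂ : Q w₂ = -1 := by
        rw [hw₂, qf_sub, hQbx, hQu', hpbxu']; ring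
      have p1 : polar Q (b⁻¹ • x) (b⁻¹ • x) = 0 := by
        rw [polar_smul_left, polar_smul_right, hpxx, smul_zero, smul_zero]
      have p2 : polar Q u' (b⁻¹ • x) = 1 := by
        rw [polar_smul_right, hpu'x, smul_eq_mul, inv_mul_cancel₀ hbne]
      have hpolw : polar Q w₂ w₁ = 0 := by
        rw [hw₂, hw₁, polar_sub_left, polar_add_right, polar_add_right]
        rw [p1, hpbxu', p2, hpu'u']
        ring
      obtain ⟨Q₁, hQ₁1, hsp₁⟩ := split_off h2 Q w₁ (by rw [hQw₁]; exact one_ne_zero)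
      set W₁ := orthC Q w₁ with hW₁
      have w₂mem : w₂ ∈ W₁ := mem_orthC.mpr hpolw
      set Qr := qOn Q W₁ with hQr
      set v₂ : W₁ := ⟨w₂, w₂mem⟩ with hv₂
      have hQrv₂ : Qr v₂ = -1 := by rw [hQr, qOn_apply]; exact hQw₂
      obtain ⟨Q₂, hQ₂1, hsp₂⟩ := split_off h2 Qr v₂
        (by rw [hQrv₂]; exact neg_ne_zero.mpr one_ne_zero)
      set W₂ := orthC Qr v₂ with hW₂
      set R := qOn Qr W₂ with hR
      letI := invertibleOfNonzero h2
      haveI hfd1 : FiniteDimensional k W₁ := inferInstance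
      haveI hfd2 : FiniteDimensional k W₂ := inferInstance
      obtain ⟨f, hf⟩ := QuadraticForm.equivalent_weightedSumSquares (K := k) (V := W₂) R
      have hfdiag : R.Equivalent (diagQF k f) := hf
      set s1 : Fin 1 → k := fun _ => (1:k) with hs1
      set sm1 : Fin 1 → k := fun _ => (-1:k) with hsm1
      have eQ₁ : Q₁.Equivalent (diagQF k s1) := by
        have hQ₁eq : Q₁ = (1:k) • QuadraticMap.sq := by
          rw [one_dim_eq Q₁, hQ₁1, hQw₁]
        rw [hQ₁eq]
        exact (isom_single 1).symm
      have eQ₂ : Q₂.Equivalent (diagQF k sm1) := by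
        have hQ₂eq : Q₂ = (-1:k) • QuadraticMap.sq := by
          rw [one_dim_eq Q₂, hQ₂1, hQrv₂]
        rw [hQ₂eq]
        exact (isom_single (-1)).symm
      have big : Q.Equivalent (diagQF k (Sum.elim s1 (Sum.elim sm1 f))) := by
        refine hsp₁.trans ?_
        refine (Equivalent.prod eQ₁ ?_).trans (isom_sum_prod s1 (Sum.elim sm1 f)).symm
        refine hsp₂.trans ?_
        exact (Equivalent.prod eQ₂ hfdiag).trans (isom_sum_prod sm1 f).symm
      have big2 : FormIsom k d (Sum.elim s1 (Sum.elim sm1 f)) := big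
      have hf_ne : ∀ t, f t ≠ 0 := fun t =>
        entries_ne_zero_of_isom h2 big2 hd (Sum.inr (Sum.inr t))
      have hcard2 : Fintype.card ι = 2 + Module.finrank k W₂ := by
        have := isom_card big2
        simp only [Fintype.card_sum, Fintype.card_fin] at this
        omega
      have hlt : Module.finrank k W₂ < n := by omega
      obtain ⟨w, s, e, he, hiso⟩ := IH (Module.finrank k W₂) hlt
        (Fin (Module.finrank k W₂)) inferInstance f (Fintype.card_fin _) hf_ne
      refine ⟨1 + w, s, e, he, ?_⟩
      have stepA : FormIsom k d (Sum.elim s1 (Sum.elim sm1 (Sum.elim (hypForm k w) e))) :=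
        big2.trans (isom_sum_congr (FormIsom.refl s1)
          (isom_sum_congr (FormIsom.refl sm1) hiso))
      have stepB : FormIsom k d
          (Sum.elim (Sum.elim s1 (Sum.elim sm1 (hypForm k w))) e) := by
        refine stepA.trans ?_
        refine (isom_sum_congr (FormIsom.refl s1) (isom_sum_assoc sm1 (hypForm k w) e).symm).trans ?_
        exact (isom_sum_assoc s1 (Sum.elim sm1 (hypForm k w)) e).symm
      refine stepB.trans (isom_sum_congr ?_ (FormIsom.refl e))
      -- FormIsom (Sum.elim s1 (Sum.elim sm1 (hypForm w))) (hypForm (1+w))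
      refine ((isom_sum_assoc s1 sm1 (hypForm k w)).symm.trans ?_)
      refine (isom_sum_congr (isom_pair_hyp) (FormIsom.refl (hypForm k w))).trans ?_
      exact (hyp_add 1 w).symm

theorem exists_decomp (h2 : (2:k) ≠ 0) (d : ι → k) (hd : ∀ t, d t ≠ 0) :
    ∃ (w s : ℕ) (e : Fin s → k), (diagQF k e).Anisotropic ∧
      FormIsom k d (Sum.elim (hypForm k w) e) :=
  exists_decomp_aux h2 (Fintype.card ι) ι inferInstance d rfl hd

theorem witt_eq (h2 : (2:k) ≠ 0) {d : ι → k} {w s : ℕ} {e : Fin s → k}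
    (he : (diagQF k e).Anisotropic) (h : FormIsom k d (Sum.elim (hypForm k w) e)) :
    wittIndex k d = w := by
  apply le_antisymm
  · apply csSup_le ⟨0, witt_mem_zero d⟩
    rintro m ⟨s', f, hm⟩
    by_contra hlt
    push_neg at hlt
    have hm' : m = w + (m - w) := by omega
    have h1 : FormIsom k d (Sum.elim (hypForm k (w + (m-w))) f) := by rw [← hm']; exact hm
    have h2' : FormIsom k d (Sum.elim (Sum.elim (hypForm k w) (hypForm k (m-w))) f) :=
      h1.trans (isom_sum_congr (hyp_add w (m-w)) (FormIsom.refl f))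
    have h3 : FormIsom k d (Sum.elim (hypForm k w) (Sum.elim (hypForm k (m-w)) f)) :=
      h2'.trans (isom_sum_assoc _ _ _)
    have h4 : FormIsom k e (Sum.elim (hypForm k (m-w)) f) :=
      cancel_left h2 (hyp_ne_zero w) (h.symm.trans h3)
    exact hyp_isotropic (by omega : 1 ≤ m - w) (iso_aniso h4.symm he)
  · exact witt_ge_of_isom h

theorem witt_isom_empty (d : ι → k) {s : ℕ} {e : Fin s → k}
    (h : FormIsom k d (Sum.elim (hypForm k 0) e)) : FormIsom k d e := by
  haveI : IsEmpty (Fin (2*0)) := ⟨fun x => absurd x.isLt (by omega)⟩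
  exact h.trans (isom_empty_left _ _)

theorem witt_aniso (h2 : (2:k) ≠ 0) {d : ι → k} (h : (diagQF k d).Anisotropic) :
    wittIndex k d = 0 := by
  haveI : IsEmpty (Fin (2*0)) := ⟨fun x => absurd x.isLt (by omega)⟩
  apply witt_eq h2 (e := d ∘ (Fintype.equivFin ι).symm)
  · exact iso_aniso (isom_reindex d _) h
  · exact (isom_toFin d).trans (isom_empty_left _ _).symm

theorem witt_zero_iff_aniso (h2 : (2:k) ≠ 0) {d : ι → k} (hd : ∀ t, d t ≠ 0) :
    wittIndex k d = 0 ↔ (diagQF k d).Anisotropic := by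
  constructor
  · intro h0
    obtain ⟨w, s, e, he, hiso⟩ := exists_decomp h2 d hd
    have := witt_eq h2 he hiso
    rw [h0] at this
    subst this
    exact iso_aniso (witt_isom_empty d hiso) he
  · exact witt_aniso h2

theorem witt_pos_of_isotropic (h2 : (2:k) ≠ 0) {d : ι → k} (hd : ∀ t, d t ≠ 0)
    (h : ¬ (diagQF k d).Anisotropic) : 1 ≤ wittIndex k d := by
  rcases Nat.eq_zero_or_pos (wittIndex k d) with h0 | h1
  · exact absurd ((witt_zero_iff_aniso h2 hd).mp h0) h
  · exact h1

theorem witt_sum_hyp (h2 : (2:k) ≠ 0) {p : ι → k} (hp : ∀ t, p t ≠ 0) (a : ℕ) :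
    wittIndex k (Sum.elim (hypForm k a) p) = a + wittIndex k p := by
  obtain ⟨w, s, e, he, hiso⟩ := exists_decomp h2 p hp
  have hw : wittIndex k p = w := witt_eq h2 he hiso
  have hbig : FormIsom k (Sum.elim (hypForm k a) p) (Sum.elim (hypForm k (a+w)) e) :=
    (isom_sum_congr (FormIsom.refl _) hiso).trans ((isom_sum_assoc _ _ _).symm.trans
      (isom_sum_congr (hyp_add a w).symm (FormIsom.refl e)))
  rw [witt_eq h2 he hbig, hw]

end EE

section FF
variable {k : Type} [Field k]
variable {ι κ : Type} [Fintype ι] [Fintype κ]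


-- ===== ℕ∞ transfer lemmas =====
lemma coe_sInf_of_nonempty {S : Set ℕ} (h : S.Nonempty) :
    sInf ((fun n : ℕ => (n:ℕ∞)) '' S) = ((sInf S : ℕ) : ℕ∞) := by
  apply le_antisymm
  · exact sInf_le ⟨sInf S, Nat.sInf_mem h, rfl⟩
  · apply le_sInf
    rintro N ⟨n, hn, rfl⟩
    exact Nat.cast_le.mpr (Nat.sInf_le hn)

lemma coe_sSup_of_bdd {S : Set ℕ} (hne : S.Nonempty) (hbdd : BddAbove S) :
    sSup ((fun n : ℕ => (n:ℕ∞)) '' S) = ((sSup S : ℕ) : ℕ∞) := by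
  apply le_antisymm
  · apply sSup_le; rintro N ⟨n, hn, rfl⟩; exact Nat.cast_le.mpr (le_csSup hbdd hn)
  · exact le_sSup ⟨sSup S, Nat.sSup_mem hne hbdd, rfl⟩

lemma coe_sSup_of_unbdd {S : Set ℕ} (h : ¬ BddAbove S) :
    sSup ((fun n : ℕ => (n:ℕ∞)) '' S) = ⊤ := by
  rw [sSup_eq_top]
  intro b hb
  lift b to ℕ using hb.ne
  obtain ⟨n, hn, hbn⟩ : ∃ n ∈ S, b < n := by
    by_contra hc
    push_neg at hc
    exact h ⟨b, fun x hx => hc x hx⟩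
  exact ⟨n, ⟨n, hn, rfl⟩, by exact_mod_cast hbn⟩

-- ===== the natural-number u and m sets =====
def SetU (k : Type) [Field k] : Set ℕ :=
  {n | ∃ d : Fin n → k, (∀ t, d t ≠ 0) ∧ (diagQF k d).Anisotropic}

def MSet (k : Type) [Field k] (i j : ℕ) : Set ℕ :=
  {n | 1 ≤ n ∧ ∃ d : Fin n → k, (∀ t, d t ≠ 0) ∧ wittIndex k d < j ∧
      ∀ σ : Fin i → k, (∀ t, σ t ≠ 0) → j ≤ wittIndex k (Sum.elim d σ)}

lemma uInv_eq_image : uInv k = sSup ((fun n : ℕ => (n : ℕ∞)) '' SetU k) := by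
  unfold uInv SetU
  congr 1
  ext N
  constructor
  · rintro ⟨n, rfl, d, h1, h2⟩; exact ⟨n, ⟨d, h1, h2⟩, rfl⟩
  · rintro ⟨n, ⟨d, h1, h2⟩, rfl⟩; exact ⟨n, rfl, d, h1, h2⟩

lemma mInv_eq_image (i j : ℕ) : mInv k i j = sInf ((fun n : ℕ => (n : ℕ∞)) '' MSet k i j) := by
  unfold mInv MSet
  congr 1
  ext N
  constructor
  · rintro ⟨n, rfl, h0, d, h1, h2, h3⟩; exact ⟨n, ⟨h0, d, h1, h2, h3⟩, rfl⟩
  · rintro ⟨n, ⟨h0, d, h1, h2, h3⟩, rfl⟩; exact ⟨n, rfl, h0, d, h1, h2, h3⟩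

lemma setU_zero_mem : 0 ∈ SetU k :=
  ⟨fun _ => 1, fun _ => one_ne_zero, fun x _ => Subsingleton.elim x 0⟩

lemma aniso_single {c : k} (hc : c ≠ 0) :
    (diagQF k (fun _ : Fin 1 => c)).Anisotropic := by
  intro x hx
  rw [diag_apply, Fin.sum_univ_one] at hx
  have hx0 : x 0 = 0 := by
    rcases mul_eq_zero.mp hx with h | h
    · exact absurd h hc
    · exact mul_self_eq_zero.mp h
  funext t
  rw [Subsingleton.elim t 0, hx0]
  rfl

lemma one_mem_setU : 1 ∈ SetU k :=
  ⟨fun _ => 1, fun _ => one_ne_zero, aniso_single one_ne_zero⟩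

lemma setU_bdd (hu : uInv k ≠ ⊤) : BddAbove (SetU k) := by
  by_contra h
  exact hu (by rw [uInv_eq_image]; exact coe_sSup_of_unbdd h)

lemma uInv_eq_uNat (hu : uInv k ≠ ⊤) : uInv k = ((sSup (SetU k) : ℕ) : ℕ∞) := by
  rw [uInv_eq_image, coe_sSup_of_bdd ⟨0, setU_zero_mem⟩ (setU_bdd hu)]

lemma uNat_mem (hu : uInv k ≠ ⊤) : sSup (SetU k) ∈ SetU k :=
  Nat.sSup_mem ⟨0, setU_zero_mem⟩ (setU_bdd hu)

lemma one_le_uNat (hu : uInv k ≠ ⊤) : 1 ≤ sSup (SetU k) :=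
  le_csSup (setU_bdd hu) one_mem_setU

lemma card_le_uNat (hu : uInv k ≠ ⊤) {d : ι → k} (hd : (diagQF k d).Anisotropic) :
    Fintype.card ι ≤ sSup (SetU k) := by
  apply le_csSup (setU_bdd hu)
  exact ⟨d ∘ (Fintype.equivFin ι).symm, fun t => aniso_entries_ne_zero hd _,
    iso_aniso (isom_reindex d (Fintype.equivFin ι).symm) hd⟩

lemma aniso_restrict {g : κ → k} (hg : (diagQF k g).Anisotropic)
    (ρ : ι → κ) (hρ : Function.Injective ρ) : (diagQF k (g ∘ ρ)).Anisotropic := by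
  classical
  intro x hx
  set y : κ → k := fun i => if h : ∃ t, ρ t = i then x h.choose else 0 with hy
  have hyρ : ∀ t, y (ρ t) = x t := by
    intro t
    have hex : ∃ t', ρ t' = ρ t := ⟨t, rfl⟩
    simp only [hy, dif_pos hex]
    congr 1
    exact hρ hex.choose_spec
  have hQy : diagQF k g y = 0 := by
    rw [diag_apply]
    rw [← Finset.sum_subset (Finset.subset_univ (Finset.univ.image ρ))]
    · rw [Finset.sum_image (fun a _ b _ h => hρ h)]
      rw [← hx, diag_apply]
      apply Finset.sum_congr rfl
      intro t _
      rw [hyρ]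
      rfl
    · intro i _ hi
      have : ¬ ∃ t, ρ t = i := by
        intro ⟨t, ht⟩
        exact hi (Finset.mem_image.mpr ⟨t, Finset.mem_univ t, ht⟩)
      simp only [hy, dif_neg this]
      ring
  have hy0 := hg y hQy
  funext t
  have := congrFun hy0 (ρ t)
  rw [hyρ] at this
  exact this

lemma mem_setU_of_le (hu : uInv k ≠ ⊤) {n : ℕ} (hn : n ≤ sSup (SetU k)) : n ∈ SetU k := by
  obtain ⟨g, hgne, hg⟩ := uNat_mem hu
  exact ⟨g ∘ Fin.castLE hn, fun t => hgne _, aniso_restrict hg _ (Fin.castLE_injective hn)⟩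

lemma isotropic_of_card_gt (hu : uInv k ≠ ⊤) {d : ι → k} (hd : ∀ t, d t ≠ 0)
    (hgt : sSup (SetU k) < Fintype.card ι) : ¬ (diagQF k d).Anisotropic :=
  fun h => absurd (card_le_uNat hu h) (by omega)

lemma uNat_mem_setM1 (h2 : (2:k) ≠ 0) (hu : uInv k ≠ ⊤) : sSup (SetU k) ∈ MSet k 1 1 := by
  obtain ⟨g, hgne, hg⟩ := uNat_mem hu
  refine ⟨one_le_uNat hu, g, hgne, by rw [witt_aniso h2 hg]; omega, ?_⟩
  intro σ hσ
  have hne : ∀ t, Sum.elim g σ t ≠ 0 := by rintro (t | t); exacts [hgne t, hσ t]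
  apply witt_pos_of_isotropic h2 hne
  apply isotropic_of_card_gt hu hne
  simp only [Fintype.card_sum, Fintype.card_fin]
  omega

lemma setM1_nonempty (h2 : (2:k) ≠ 0) (hu : uInv k ≠ ⊤) : (MSet k 1 1).Nonempty :=
  ⟨_, uNat_mem_setM1 h2 hu⟩

lemma mNat_le_uNat (h2 : (2:k) ≠ 0) (hu : uInv k ≠ ⊤) :
    sInf (MSet k 1 1) ≤ sSup (SetU k) :=
  Nat.sInf_le (uNat_mem_setM1 h2 hu)

lemma one_le_mNat (h2 : (2:k) ≠ 0) (hu : uInv k ≠ ⊤) : 1 ≤ sInf (MSet k 1 1) :=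
  (Nat.sInf_mem (setM1_nonempty h2 hu)).1

lemma mem_setM1 (h2 : (2:k) ≠ 0) {a : ℕ} {α : Fin a → k}
    (hα : (diagQF k α).Anisotropic)
    (hne : ∀ c : k, c ≠ 0 → ¬ (diagQF k (Sum.elim α (fun _ : Fin 1 => c))).Anisotropic) :
    a ∈ MSet k 1 1 := by
  have hαne := aniso_entries_ne_zero hα
  have ha1 : 1 ≤ a := by
    by_contra h
    have ha0 : a = 0 := by omega
    subst ha0
    haveI : IsEmpty (Fin 0) := inferInstance
    exact hne 1 one_ne_zero
      (iso_aniso (isom_empty_left α (fun _ : Fin 1 => (1:k))) (aniso_single one_ne_zero))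
  refine ⟨ha1, α, hαne, by rw [witt_aniso h2 hα]; omega, ?_⟩
  intro σ hσ
  have hσeq : (fun _ : Fin 1 => σ 0) = σ := funext fun t => by rw [Subsingleton.elim t (0 : Fin 1)]
  have hne' := hne (σ 0) (hσ 0)
  rw [hσeq] at hne'
  apply witt_pos_of_isotropic h2 ?_ hne'
  rintro (t | t); exacts [hαne t, hσ t]

-- ===== the pair form ⟨c, -c⟩ is hyperbolic =====
lemma pair_equiv_one_pair (h2 : (2:k) ≠ 0) {c : k} (hc : c ≠ 0) :
    ((c • (QuadraticMap.sq : QuadraticForm k k)).prod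
      ((-c) • (QuadraticMap.sq : QuadraticForm k k))).Equivalent
    (((1:k) • (QuadraticMap.sq : QuadraticForm k k)).prod
      (((-1):k) • (QuadraticMap.sq : QuadraticForm k k))) := by
  refine ⟨⟨⟨⟨⟨fun z => ((c*z.1 + c*z.2 + z.1 - z.2)/2, (c*z.1 + c*z.2 - z.1 + z.2)/2), ?_⟩, ?_⟩,
    fun z => ((z.1+z.2)/(2*c) + (z.1 - z.2)/2, (z.1+z.2)/(2*c) - (z.1-z.2)/2), ?_, ?_⟩, ?_⟩⟩
  · intro a b
    simp only [Prod.fst_add, Prod.snd_add, Prod.mk_add_mk, Prod.mk.injEq]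
    constructor <;> ring
  · intro r a
    simp only [Prod.smul_fst, Prod.smul_snd, Prod.smul_mk, smul_eq_mul, RingHom.id_apply,
      Prod.mk.injEq]
    constructor <;> ring
  · intro z
    obtain ⟨z1, z2⟩ := z
    simp only [LinearMap.coe_mk, AddHom.coe_mk, Prod.mk.injEq]
    constructor <;> (field_simp; ring)
  · intro z
    obtain ⟨z1, z2⟩ := z
    simp only [LinearMap.coe_mk, AddHom.coe_mk, Prod.mk.injEq]
    constructor <;> (field_simp; ring)
  · intro z
    simp only [LinearEquiv.coe_mk, LinearMap.coe_mk, AddHom.coe_mk,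
      QuadraticMap.prod_apply, QuadraticMap.smul_apply, QuadraticMap.sq_apply, smul_eq_mul]
    field_simp
    ring

lemma isom_pair_c (h2 : (2:k) ≠ 0) {c : k} (hc : c ≠ 0) :
    FormIsom k (Sum.elim (fun _ : Fin 1 => c) (fun _ : Fin 1 => -c)) (hypForm k 1) := by
  have A1 : (diagQF k (Sum.elim (fun _ : Fin 1 => c) (fun _ : Fin 1 => -c))).Equivalent
      ((c • (QuadraticMap.sq : QuadraticForm k k)).prod
        ((-c) • (QuadraticMap.sq : QuadraticForm k k))) :=
    (isom_sum_prod _ _).trans (Equivalent.prod (isom_single c) (isom_single (-c)))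
  have A2 : (diagQF k (Sum.elim (fun _ : Fin 1 => (1:k)) (fun _ : Fin 1 => (-1:k)))).Equivalent
      (((1:k) • (QuadraticMap.sq : QuadraticForm k k)).prod
        (((-1):k) • (QuadraticMap.sq : QuadraticForm k k))) :=
    (isom_sum_prod _ _).trans (Equivalent.prod (isom_single 1) (isom_single (-1)))
  have main : (diagQF k (Sum.elim (fun _ : Fin 1 => c) (fun _ : Fin 1 => -c))).Equivalent
      (diagQF k (Sum.elim (fun _ : Fin 1 => (1:k)) (fun _ : Fin 1 => (-1:k)))) :=
    (A1.trans (pair_equiv_one_pair h2 hc)).trans A2.symm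
  exact FormIsom.trans (k := k) main isom_pair_hyp

lemma witt_single_le_one (h2 : (2:k) ≠ 0) {α : ι → k} (hα : (diagQF k α).Anisotropic)
    {c : k} (hc : c ≠ 0) : wittIndex k (Sum.elim α (fun _ : Fin 1 => c)) ≤ 1 := by
  have hαne := aniso_entries_ne_zero hα
  have hne : ∀ t, Sum.elim α (fun _ : Fin 1 => c) t ≠ 0 := by
    rintro (t | t); exacts [hαne t, hc]
  obtain ⟨S, s, β, hβ, hiso⟩ := exists_decomp h2 _ hne
  rw [witt_eq h2 hβ hiso]
  set cm : Fin 1 → k := fun _ => -c with hcm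
  have hγ1 : wittIndex k (Sum.elim (Sum.elim α (fun _ : Fin 1 => c)) cm) = 1 := by
    have h1 : FormIsom k (Sum.elim (Sum.elim α (fun _ : Fin 1 => c)) cm)
        (Sum.elim (hypForm k 1) α) :=
      (isom_sum_assoc _ _ _).trans ((isom_sum_congr (FormIsom.refl α) (isom_pair_c h2 hc)).trans
        (isom_sum_comm _ _))
    rw [witt_isom h1, witt_sum_hyp h2 hαne, witt_aniso h2 hα]
  have hγ2 : S ≤ wittIndex k (Sum.elim (Sum.elim α (fun _ : Fin 1 => c)) cm) := by
    have h1 : FormIsom k (Sum.elim (Sum.elim α (fun _ : Fin 1 => c)) cm)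
        (Sum.elim (hypForm k S) (Sum.elim β cm)) :=
      (isom_sum_congr hiso (FormIsom.refl cm)).trans (isom_sum_assoc _ _ _)
    exact witt_ge_of_isom h1
  omega

lemma isom_snoc {i : ℕ} (p : ι → k) (σ : Fin i → k) (c : k) :
    FormIsom k (Sum.elim p (Fin.snoc σ c)) (Sum.elim (Sum.elim p σ) (fun _ : Fin 1 => c)) := by
  apply FormIsom.symm
  apply isom_of_comp_eq ((Equiv.sumAssoc ι (Fin i) (Fin 1)).trans
    (Equiv.sumCongr (Equiv.refl ι) (finSumFinEquiv : Fin i ⊕ Fin 1 ≃ Fin (i+1))))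
  funext x
  rcases x with (x | x) | x
  · rfl
  · show σ x = Sum.elim p (Fin.snoc σ c) (Sum.inr (finSumFinEquiv (Sum.inl x)))
    simp only [finSumFinEquiv_apply_left, Sum.elim_inr]
    rw [show (Fin.castAdd 1 x) = Fin.castSucc x from rfl, Fin.snoc_castSucc]
  · show c = Sum.elim p (Fin.snoc σ c) (Sum.inr (finSumFinEquiv (Sum.inr x)))
    have hx : x = 0 := Subsingleton.elim _ _
    subst hx
    simp only [finSumFinEquiv_apply_right, Sum.elim_inr]
    have : (Fin.natAdd i (0 : Fin 1)) = Fin.last i := Fin.ext (by simp)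
    rw [this, Fin.snoc_last]

-- ===== the greedy construction =====
lemma greedy (h2 : (2:k) ≠ 0) (hu : uInv k ≠ ⊤) {P : ℕ} {p : Fin P → k}
    (hp : (diagQF k p).Anisotropic) :
    ∀ i : ℕ, ∃ σ : Fin i → k, (∀ t, σ t ≠ 0) ∧
      min (sInf (MSet k 1 1) - 1) (P + i) ≤ P + i - 2 * wittIndex k (Sum.elim p σ) ∧
      2 * wittIndex k (Sum.elim p σ) ≤ P + i := by
  have hpne := aniso_entries_ne_zero hp
  intro i
  induction i with
  | zero =>
    refine ⟨fun _ => 1, fun _ => one_ne_zero, ?_⟩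
    haveI : IsEmpty (Fin 0) := inferInstance
    have hiso : FormIsom k (Sum.elim p (fun _ : Fin 0 => (1:k))) p :=
      (isom_sum_comm _ _).trans (isom_empty_left _ _)
    rw [witt_isom hiso, witt_aniso h2 hp]
    omega
  | succ i IHi =>
    obtain ⟨σ, hσne, hbound, hble⟩ := IHi
    have hρne : ∀ t, Sum.elim p σ t ≠ 0 := by rintro (t | t); exacts [hpne t, hσne t]
    obtain ⟨w, a, α, hα, hiso⟩ := exists_decomp h2 (Sum.elim p σ) hρne
    have hw : wittIndex k (Sum.elim p σ) = w := witt_eq h2 hα hiso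
    have hcard : P + i = 2*w + a := by
      have := isom_card hiso
      simp only [Fintype.card_sum, Fintype.card_fin] at this
      omega
    have hαne := aniso_entries_ne_zero hα
    have hWval : ∀ c : k, c ≠ 0 → wittIndex k (Sum.elim p (Fin.snoc σ c)) =
        w + wittIndex k (Sum.elim α (fun _ : Fin 1 => c)) := by
      intro c hc
      have chain : FormIsom k (Sum.elim p (Fin.snoc σ c))
          (Sum.elim (hypForm k w) (Sum.elim α (fun _ : Fin 1 => c))) :=
        (isom_snoc p σ c).trans ((isom_sum_congr hiso (FormIsom.refl _)).trans
          (isom_sum_assoc _ _ _))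
      rw [witt_isom chain, witt_sum_hyp h2 (by rintro (t | t); exacts [hαne t, hc])]
    by_cases hext : ∃ c : k, c ≠ 0 ∧ (diagQF k (Sum.elim α (fun _ : Fin 1 => c))).Anisotropic
    · obtain ⟨c, hc, hanis⟩ := hext
      refine ⟨Fin.snoc σ c, ?_, ?_⟩
      · intro t
        induction t using Fin.lastCases with
        | last => rw [Fin.snoc_last]; exact hc
        | cast j => rw [Fin.snoc_castSucc]; exact hσne j
      · rw [hWval c hc, witt_aniso h2 hanis]
        rw [hw] at hbound hble
        omega
    · push_neg at hext
      have hmem : a ∈ MSet k 1 1 := mem_setM1 h2 hα (fun c hc => hext c hc)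
      have hma : sInf (MSet k 1 1) ≤ a := Nat.sInf_le hmem
      have ha1 : 1 ≤ a := hmem.1
      refine ⟨Fin.snoc σ 1, ?_, ?_⟩
      · intro t
        induction t using Fin.lastCases with
        | last => rw [Fin.snoc_last]; exact one_ne_zero
        | cast j => rw [Fin.snoc_castSucc]; exact hσne j
      · rw [hWval 1 one_ne_zero]
        have hw2 := witt_single_le_one h2 hα (one_ne_zero (α := k))
        omega

end FF

section GG
variable {k : Type} [Field k]


open QuadraticMap

variable {k : Type} [Field k]

lemma coe_max' (a b : ℕ) : ((max a b : ℕ) : ℕ∞) = max (a:ℕ∞) (b:ℕ∞) := by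
  rcases le_total a b with h | h
  · rw [max_eq_right h, max_eq_right (Nat.cast_le.mpr h)]
  · rw [max_eq_left h, max_eq_left (Nat.cast_le.mpr h)]

lemma coe_expr (a j i : ℕ) :
    ((a + 2*j - 1 - i : ℕ) : ℕ∞) = (a:ℕ∞) + 2*(j:ℕ∞) - 1 - (i:ℕ∞) := by
  rw [ENat.coe_sub, ENat.coe_sub]
  push_cast
  rfl

-- the key ℕ-level membership and bound results
lemma lower_bound_nat (h2 : (2:k) ≠ 0) (hu : uInv k ≠ ⊤) {i j : ℕ} (hj : 1 ≤ j)
    {n : ℕ} (hn : n ∈ MSet k i j) : sInf (MSet k 1 1) + 2*j - 1 ≤ n + i := by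
  obtain ⟨hn1, d, hdne, hdw, hcond⟩ := hn
  obtain ⟨w, P, p, hp, hiso⟩ := exists_decomp h2 d hdne
  have hw : wittIndex k d = w := witt_eq h2 hp hiso
  have hnP : n = 2*w + P := by
    have := isom_card hiso
    simp only [Fintype.card_sum, Fintype.card_fin] at this
    omega
  obtain ⟨σ, hσne, hbound, hble⟩ := greedy h2 hu hp i
  have hj' := hcond σ hσne
  have hpne := aniso_entries_ne_zero hp
  have hval : wittIndex k (Sum.elim d σ) = w + wittIndex k (Sum.elim p σ) := by
    have chain : FormIsom k (Sum.elim d σ) (Sum.elim (hypForm k w) (Sum.elim p σ)) :=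
      (isom_sum_congr hiso (FormIsom.refl σ)).trans (isom_sum_assoc _ _ _)
    rw [witt_isom chain, witt_sum_hyp h2 (by rintro (t | t); exacts [hpne t, hσne t])]
  rw [hval] at hj'
  rw [hw] at hdw
  omega

lemma upper_bound_nat (h2 : (2:k) ≠ 0) (hu : uInv k ≠ ⊤) {i j : ℕ} (hi : 1 ≤ i) (hj : 1 ≤ j) :
    max 1 (sSup (SetU k) + 2*j - 1 - i) ∈ MSet k i j := by
  set u := sSup (SetU k) with hudef
  have hu1 : 1 ≤ u := one_le_uNat hu
  set n₀ := max 1 (u + 2*j - 1 - i) with hn₀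
  have hmax1 : 1 ≤ n₀ := le_max_left _ _
  have hmax2 : u + 2*j - 1 - i ≤ n₀ := le_max_right _ _
  have hmax3 : n₀ = 1 ∨ n₀ = u + 2*j - 1 - i := by
    rw [hn₀]; exact max_choice _ _
  clear_value n₀
  set pd := if n₀ ≤ u then n₀ else u - ((n₀ - u) % 2) with hpd
  have hpdkey : pd ≤ u ∧ pd ≤ n₀ ∧ (n₀ - pd) % 2 = 0 ∧ (n₀ ≤ u → pd = n₀) ∧
      (u < n₀ → u - 1 ≤ pd) := by
    rw [hpd]; split <;> omega
  obtain ⟨hpdu, hpdn, hpar, hA, hB⟩ := hpdkey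
  clear_value pd
  set t := (n₀ - pd)/2 with ht
  have hsum : 2*t + pd = n₀ := by omega
  have htj : t + 1 ≤ j := by rcases hmax3 with h | h <;> omega
  have hdim : u + 2*j - 1 ≤ n₀ + i := by omega
  clear_value t
  obtain ⟨p, hpne, hp⟩ := mem_setU_of_le hu hpdu
  set d0 : (Fin (2*t) ⊕ Fin pd) → k := Sum.elim (hypForm k t) p with hd0
  have hd0ne : ∀ s, d0 s ≠ 0 := by rintro (s | s); exacts [hyp_ne_zero t s, hpne s]
  have hd0w : wittIndex k d0 = t := by
    rw [hd0, witt_sum_hyp h2 hpne, witt_aniso h2 hp]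
    omega
  set σ0 : Fin n₀ ≃ (Fin (2*t) ⊕ Fin pd) :=
    (finCongr (by omega : n₀ = 2*t + pd)).trans finSumFinEquiv.symm with hσ0
  set d : Fin n₀ → k := d0 ∘ σ0 with hd
  have hiso : FormIsom k d d0 := isom_reindex d0 σ0
  refine ⟨hmax1, d, fun s => hd0ne _, ?_, ?_⟩
  · rw [witt_isom hiso, hd0w]; omega
  · intro σ hσ
    have hne : ∀ s, Sum.elim d σ s ≠ 0 := by rintro (s | s); exacts [hd0ne _, hσ s]
    obtain ⟨S, b, β, hβ, hiso2⟩ := exists_decomp h2 (Sum.elim d σ) hne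
    have hS : wittIndex k (Sum.elim d σ) = S := witt_eq h2 hβ hiso2
    have hcard : n₀ + i = 2*S + b := by
      have := isom_card hiso2
      simp only [Fintype.card_sum, Fintype.card_fin] at this
      omega
    have hbu : b ≤ u := by
      have := card_le_uNat hu hβ
      simpa using this
    omega

theorem main_bounds (h2 : (2:k) ≠ 0) (hu : uInv k ≠ ⊤) (i j : ℕ) (hi : 1 ≤ i) (hj : 1 ≤ j) :
    max 1 (mInv k 1 1 + 2 * (j : ℕ∞) - 1 - (i : ℕ∞)) ≤ mInv k i j ∧
    mInv k i j ≤ max 1 (uInv k + 2 * (j : ℕ∞) - 1 - (i : ℕ∞)) := by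
  set u := sSup (SetU k) with hudef
  set m1 := sInf (MSet k 1 1) with hm1def
  have hm1 : mInv k 1 1 = (m1 : ℕ∞) := by
    rw [mInv_eq_image, coe_sInf_of_nonempty (setM1_nonempty h2 hu)]
  have huu : uInv k = (u : ℕ∞) := uInv_eq_uNat hu
  constructor
  · rw [hm1]
    apply le_sInf
    rintro N ⟨n, rfl, hn⟩
    apply max_le
    · exact Nat.one_le_cast.mpr hn.1
    · rw [← coe_expr]
      apply Nat.cast_le.mpr
      have := lower_bound_nat h2 hu hj hn
      omega
  · have hmem := upper_bound_nat h2 hu hi hj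
    have hle : mInv k i j ≤ ((max 1 (u + 2*j - 1 - i) : ℕ) : ℕ∞) :=
      sInf_le ⟨_, rfl, hmem⟩
    refine le_trans hle ?_
    rw [coe_max', coe_expr, huu]
    simp


end GG

/-- **Theorem (upper and lower bounds for the refined m-invariants).**  Let `k` be a
field of characteristic ≠ 2 with `u(k) < ∞`, and let `i, j ≥ 1`.  Then
`max{1, m(k) + 2j - 1 - i} ≤ m_{i,j}(k) ≤ max{1, u(k) + 2j - 1 - i}`
(computed in `ℕ∞` with truncated subtraction, and `m(k) = m_{1,1}(k)`).  Moreover, if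
either `u(k) + 2j - 1 - i ≤ 1` or `m(k) = u(k)`, then both inequalities are
equalities. -/
theorem statement12 (k : Type) [Field k] (hchar : ringChar k ≠ 2) (hu : uInv k ≠ ⊤)
    (i j : ℕ) (hi : 1 ≤ i) (hj : 1 ≤ j) :
    (max 1 (mInv k 1 1 + 2 * (j : ℕ∞) - 1 - (i : ℕ∞)) ≤ mInv k i j ∧
      mInv k i j ≤ max 1 (uInv k + 2 * (j : ℕ∞) - 1 - (i : ℕ∞))) ∧
    ((uInv k + 2 * (j : ℕ∞) - 1 - (i : ℕ∞) ≤ 1 ∨ mInv k 1 1 = uInv k) →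
      (max 1 (mInv k 1 1 + 2 * (j : ℕ∞) - 1 - (i : ℕ∞)) = mInv k i j ∧
        mInv k i j = max 1 (uInv k + 2 * (j : ℕ∞) - 1 - (i : ℕ∞)))) := by
  have h2 : (2:k) ≠ 0 := Ring.two_ne_zero hchar
  obtain ⟨hlow, hhigh⟩ := main_bounds h2 hu i j hi hj
  refine ⟨⟨hlow, hhigh⟩, ?_⟩
  rintro (hcase | hcase)
  · have hm_le_u : mInv k 1 1 ≤ uInv k := by
      rw [mInv_eq_image, coe_sInf_of_nonempty (setM1_nonempty h2 hu), uInv_eq_uNat hu]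
      exact Nat.cast_le.mpr (mNat_le_uNat h2 hu)
    have hMexpr : mInv k 1 1 + 2*(j:ℕ∞) - 1 - (i:ℕ∞) ≤ 1 := by
      refine le_trans ?_ hcase
      exact tsub_le_tsub_right (tsub_le_tsub_right (add_le_add_left hm_le_u _) 1) _
    have hUmax : max 1 (uInv k + 2*(j:ℕ∞) - 1 - (i:ℕ∞)) = 1 := max_eq_left hcase
    have hMmax : max 1 (mInv k 1 1 + 2*(j:ℕ∞) - 1 - (i:ℕ∞)) = 1 := max_eq_left hMexpr
    have h1le : (1:ℕ∞) ≤ mInv k i j := le_trans (le_max_left 1 _) hlow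
    have hle1 : mInv k i j ≤ 1 := by rw [hUmax] at hhigh; exact hhigh
    constructor
    · rw [hMmax]; exact le_antisymm h1le hle1
    · rw [hUmax]; exact le_antisymm hle1 h1le
  · have hEq : max 1 (mInv k 1 1 + 2*(j:ℕ∞) - 1 - (i:ℕ∞))
        = max 1 (uInv k + 2*(j:ℕ∞) - 1 - (i:ℕ∞)) := by rw [hcase]
    exact ⟨le_antisymm hlow (hhigh.trans hEq.ge),
      le_antisymm hhigh (hEq.symm.trans_le hlow)⟩
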